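/- Let G be a graph with clique modulator R of size r, S = V(G)∖R, and for each equivalence class E_i of the relation u ∼ v ⟺ N[u] = N[v] on S, let F_i ⊆ E_i be an arbitrary subset of size min{r, |E_i|}, and F = ⋃_i F_i. Then the Grundy number of G equals the Grundy number of G[R ∪ F] plus |V(G) ∖ (R ∪ F)|. -/

import Mathlib

variable {V : Type*} [Fintype V] [DecidableEq V]

/-- A Grundy coloring of the vertex set `X` of `G`: an ordered partition of `X`
into nonempty independent sets such that every vertex of the `i`-th class has a
neighbor in every earlier class. -/
def GrundyColoringOn (G : SimpleGraph V) (X : Finset V) (C : List (Finset V)) : Prop :=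
  (∀ A ∈ C, A.Nonempty) ∧
  C.Pairwise Disjoint ∧
  (∀ v, v ∈ X ↔ ∃ A ∈ C, v ∈ A) ∧
  (∀ A ∈ C, ∀ u ∈ A, ∀ w ∈ A, ¬ G.Adj u w) ∧
  (∀ i j : ℕ, ∀ hi : i < C.length, ∀ hj : j < C.length, j < i →
     ∀ v ∈ C.get ⟨i, hi⟩, ∃ u ∈ C.get ⟨j, hj⟩, G.Adj u v)

/-- The set of lengths of Grundy colorings of `X` in `G`; its greatest element
is the Grundy number of the induced subgraph `G[X]`. -/
def grundySet (G : SimpleGraph V) (X : Finset V) : Set ℕ :=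
  {n | ∃ C : List (Finset V), GrundyColoringOn G X C ∧ C.length = n}

set_option linter.unusedSectionVars false
set_option linter.unreachableTactic false
set_option linter.unusedTactic false
set_option maxHeartbeats 1000000

namespace GP

variable {G : SimpleGraph V}

lemma gco_nil : GrundyColoringOn G ∅ [] := by
  refine ⟨by simp, by simp, by simp, by simp, ?_⟩
  intro i j hi hj _ v hv; simp at hi

lemma gco_nil_eq {X : Finset V} (h : GrundyColoringOn G X []) : X = ∅ := by
  obtain ⟨-, -, h3, -, -⟩ := h
  ext v; simp [h3 v]

/-- Destructor. -/
lemma gco_cons {X : Finset V} {A : Finset V} {C : List (Finset V)}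
    (h : GrundyColoringOn G X (A :: C)) :
    GrundyColoringOn G (X \ A) C ∧ A ⊆ X ∧ A.Nonempty ∧
      (∀ u ∈ A, ∀ w ∈ A, ¬ G.Adj u w) ∧
      (∀ w ∈ X \ A, ∃ u ∈ A, G.Adj u w) ∧
      (∀ B ∈ C, Disjoint A B) := by
  obtain ⟨h1, h2, h3, h4, h5⟩ := h
  have hAmem : A ∈ A :: C := List.mem_cons_self
  have hdisj : ∀ B ∈ C, Disjoint A B := (List.pairwise_cons.mp h2).1
  have hsub : A ⊆ X := fun a ha => (h3 a).mpr ⟨A, hAmem, ha⟩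
  have hcov : ∀ v, v ∈ X \ A ↔ ∃ B ∈ C, v ∈ B := by
    intro v
    constructor
    · intro hv
      rcases Finset.mem_sdiff.mp hv with ⟨hvX, hvA⟩
      rcases (h3 v).mp hvX with ⟨B, hB, hvB⟩
      rcases List.mem_cons.mp hB with rfl | hB
      · exact absurd hvB hvA
      · exact ⟨B, hB, hvB⟩
    · rintro ⟨B, hB, hvB⟩
      refine Finset.mem_sdiff.mpr ⟨(h3 v).mpr ⟨B, List.mem_cons_of_mem _ hB, hvB⟩, ?_⟩
      exact fun hvA => (hdisj B hB).forall_ne_finset hvA hvB rfl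
  have hdom : ∀ w ∈ X \ A, ∃ u ∈ A, G.Adj u w := by
    intro w hw
    rcases (hcov w).mp hw with ⟨B, hB, hwB⟩
    rcases List.mem_iff_get.mp hB with ⟨⟨i, hi⟩, rfl⟩
    have hi' : i + 1 < (A :: C).length := by simpa using Nat.succ_lt_succ hi
    have := h5 (i+1) 0 hi' (by simp) (Nat.succ_pos i) w hwB
    simpa using this
  refine ⟨⟨fun B hB => h1 B (List.mem_cons_of_mem _ hB),
    (List.pairwise_cons.mp h2).2, hcov,
    fun B hB => h4 B (List.mem_cons_of_mem _ hB), ?_⟩, hsub, h1 A hAmem, h4 A hAmem, hdom, hdisj⟩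
  intro i j hi hj hji v hv
  have hi' : i + 1 < (A :: C).length := by simpa using Nat.succ_lt_succ hi
  have hj' : j + 1 < (A :: C).length := by simpa using Nat.succ_lt_succ hj
  exact h5 (i+1) (j+1) hi' hj' (Nat.succ_lt_succ hji) v hv

/-- Constructor. -/
lemma gco_build {Y A : Finset V} {C : List (Finset V)}
    (h : GrundyColoringOn G Y C) (hA : A.Nonempty)
    (hind : ∀ u ∈ A, ∀ w ∈ A, ¬ G.Adj u w)
    (hdisj : Disjoint A Y)
    (hdom : ∀ w ∈ Y, ∃ u ∈ A, G.Adj u w) :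
    GrundyColoringOn G (A ∪ Y) (A :: C) := by
  obtain ⟨h1, h2, h3, h4, h5⟩ := h
  have hsub : ∀ B ∈ C, B ⊆ Y := fun B hB b hb => (h3 b).mpr ⟨B, hB, hb⟩
  refine ⟨?_, ?_, ?_, ?_, ?_⟩
  · rintro B hB; rcases List.mem_cons.mp hB with rfl | hB
    · exact hA
    · exact h1 B hB
  · exact List.pairwise_cons.mpr ⟨fun B hB => hdisj.mono_right (hsub B hB), h2⟩
  · intro v
    simp only [Finset.mem_union, h3 v, List.mem_cons]
    constructor
    · rintro (hv | ⟨B, hB, hvB⟩)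
      · exact ⟨A, Or.inl rfl, hv⟩
      · exact ⟨B, Or.inr hB, hvB⟩
    · rintro ⟨B, rfl | hB, hvB⟩
      · exact Or.inl hvB
      · exact Or.inr ⟨B, hB, hvB⟩
  · rintro B hB; rcases List.mem_cons.mp hB with rfl | hB
    · exact hind
    · exact h4 B hB
  · intro i j hi hj hji v hv
    match i, hi with
    | 0, _ => omega
    | (i+1), hi =>
      match j, hj with
      | 0, hj =>
        have hv' : v ∈ C.get ⟨i, by simpa using hi⟩ := hv
        have hvY : v ∈ Y := hsub _ (List.get_mem C _) hv'
        exact hdom v hvY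
      | (j+1), hj =>
        exact h5 i j (by simpa using hi) (by simpa using hj) (by omega) v hv


lemma gco_singleton {v : V} : GrundyColoringOn G {v} [{v}] := by
  have := gco_build (G := G) (Y := ∅) (A := {v}) (C := []) gco_nil
    (Finset.singleton_nonempty v)
    (by intro u hu w hw; simp at hu hw; subst hu; subst hw; exact G.irrefl)
    (Finset.disjoint_empty_right _) (by simp)
  simpa using this

variable (G) in
def insVert [DecidableRel G.Adj] (v : V) : List (Finset V) → List (Finset V)
  | [] => [{v}]
  | A :: C => if ∀ u ∈ A, ¬ G.Adj u v then (insert v A) :: C else A :: insVert v C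

lemma insVert_length [DecidableRel G.Adj] (v : V) (C : List (Finset V)) :
    C.length ≤ (insVert G v C).length := by
  induction C with
  | nil => simp [insVert]
  | cons A C ih =>
    rw [insVert]
    split
    · simp
    · simpa using Nat.succ_le_succ ih

lemma insVert_spec [DecidableRel G.Adj] (v : V) (C : List (Finset V)) :
    ∀ X : Finset V, GrundyColoringOn G X C → v ∉ X →
      GrundyColoringOn G (insert v X) (insVert G v C) := by
  induction C with
  | nil =>
    intro X h hv
    rw [gco_nil_eq h]
    simpa [insVert] using gco_singleton (G := G) (v := v)
  | cons A C ih =>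
    intro X h hv
    obtain ⟨htail, hsub, hne, hind, hdom, hdisj⟩ := gco_cons h
    have hvA : v ∉ A := fun hvA => hv (hsub hvA)
    rw [insVert]
    split
    · rename_i hA
      have hset : insert v A ∪ (X \ A) = insert v X := by
        ext w
        simp only [Finset.mem_union, Finset.mem_insert, Finset.mem_sdiff]
        constructor
        · rintro (( rfl | hw) | ⟨hw, _⟩) <;> tauto
        · rintro (rfl | hw)
          · tauto
          · by_cases hwA : w ∈ A <;> tauto
      have := gco_build htail (Finset.insert_nonempty v A)
        (by
          intro u hu w hw
          rcases Finset.mem_insert.mp hu with rfl | huA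
          · rcases Finset.mem_insert.mp hw with h' | hwA
            · subst h'; exact G.irrefl
            · exact fun hadj => hA w hwA hadj.symm
          · rcases Finset.mem_insert.mp hw with h' | hwA
            · subst h'; exact hA u huA
            · exact hind u huA w hwA)
        (by
          rw [Finset.disjoint_left]
          intro a ha ha'
          rcases Finset.mem_insert.mp ha with rfl | ha
          · exact hv (Finset.mem_sdiff.mp ha').1
          · exact (Finset.mem_sdiff.mp ha').2 ha)
        (by
          intro w hw
          obtain ⟨u, hu, hadj⟩ := hdom w hw
          exact ⟨u, Finset.mem_insert_of_mem hu, hadj⟩)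
      rwa [hset] at this
    · rename_i hA
      push_neg at hA
      obtain ⟨u0, hu0, hadj0⟩ := hA
      have hvXA : v ∉ X \ A := fun hc => hv (Finset.mem_sdiff.mp hc).1
      have hrec := ih (X \ A) htail hvXA
      have hset : A ∪ insert v (X \ A) = insert v X := by
        ext w
        simp only [Finset.mem_union, Finset.mem_insert, Finset.mem_sdiff]
        constructor
        · rintro (hw | (rfl | ⟨hw, _⟩)) <;> first | tauto | exact Or.inr (hsub hw)
        · rintro (rfl | hw)
          · tauto
          · by_cases hwA : w ∈ A <;> tauto
      have := gco_build hrec hne hind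
        (by
          rw [Finset.disjoint_left]
          intro a ha ha'
          rcases Finset.mem_insert.mp ha' with rfl | ha'
          · exact hvA ha
          · exact (Finset.mem_sdiff.mp ha').2 ha)
        (by
          intro w hw
          rcases Finset.mem_insert.mp hw with rfl | hw
          · exact ⟨u0, hu0, hadj0⟩
          · exact hdom w hw)
      rwa [hset] at this

/-- Extension: enlarge the colored set, length does not decrease. -/
lemma gco_extend [DecidableRel G.Adj] {Y Z : Finset V} (hYZ : Y ⊆ Z) {C : List (Finset V)}
    (h : GrundyColoringOn G Y C) :
    ∃ C' : List (Finset V), GrundyColoringOn G Z C' ∧ C.length ≤ C'.length := by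
  generalize hn : (Z \ Y).card = n
  induction n generalizing Y C with
  | zero =>
    have : Z = Y := by
      have : Z \ Y = ∅ := Finset.card_eq_zero.mp hn
      have h2 := Finset.sdiff_eq_empty_iff_subset.mp this
      exact Finset.Subset.antisymm h2 hYZ
    exact ⟨C, this ▸ h, le_refl _⟩
  | succ n ih =>
    have hne : (Z \ Y).Nonempty := by
      rw [← Finset.card_pos, hn]; omega
    obtain ⟨w, hw⟩ := hne
    rcases Finset.mem_sdiff.mp hw with ⟨hwZ, hwY⟩
    have h1 := insVert_spec w C Y h hwY
    have hsub : insert w Y ⊆ Z := Finset.insert_subset hwZ hYZ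
    have hcard : (Z \ insert w Y).card = n := by
      have : Z \ insert w Y = (Z \ Y).erase w := by
        ext a; simp only [Finset.mem_sdiff, Finset.mem_insert, Finset.mem_erase]; tauto
      rw [this, Finset.card_erase_of_mem hw, hn]
      omega
    obtain ⟨C', hC', hlen⟩ := ih hsub h1 hcard
    exact ⟨C', hC', le_trans (insVert_length w C) hlen⟩

/-- Removing a whole class. -/
lemma gco_erase_class {X A : Finset V} (C₁ : List (Finset V)) {C₂ : List (Finset V)}
    (h : GrundyColoringOn G X (C₁ ++ A :: C₂)) :
    GrundyColoringOn G (X \ A) (C₁ ++ C₂) := by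
  induction C₁ generalizing X with
  | nil => exact (gco_cons h).1
  | cons B C₁ ih =>
    obtain ⟨htail, hsub, hne, hind, hdom, hdisj⟩ := gco_cons h
    have hBA : Disjoint B A := hdisj A (by simp)
    have hrec := ih htail
    have hset : B ∪ ((X \ B) \ A) = X \ A := by
      ext a
      simp only [Finset.mem_union, Finset.mem_sdiff]
      constructor
      · rintro (ha | ⟨⟨h1, h2⟩, h3⟩)
        · exact ⟨hsub ha, fun hc => hBA.forall_ne_finset ha hc rfl⟩
        · exact ⟨h1, h3⟩
      · rintro ⟨h1, h2⟩
        by_cases hB : a ∈ B <;> tauto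
    have := gco_build hrec hne hind
      (by
        rw [Finset.disjoint_left]
        intro a ha ha'
        exact (Finset.mem_sdiff.mp (Finset.mem_sdiff.mp ha').1).2 ha)
      (fun w hw => hdom w (Finset.mem_sdiff.mp hw).1)
    rwa [hset] at this

/-- Appending a final class `{z}` when every class contains a neighbor of `z`. -/
lemma gco_append {z : V} : ∀ (C : List (Finset V)) (X : Finset V),
    GrundyColoringOn G X C → z ∉ X → (∀ A ∈ C, ∃ u ∈ A, G.Adj u z) →
    GrundyColoringOn G (insert z X) (C ++ [{z}]) := by
  intro C
  induction C with
  | nil =>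
    intro X h hz _
    rw [gco_nil_eq h]
    simpa using gco_singleton (G := G) (v := z)
  | cons A C ih =>
    intro X h hz hgood
    obtain ⟨htail, hsub, hne, hind, hdom, hdisj⟩ := gco_cons h
    have hzA : z ∉ X \ A := fun hc => hz (Finset.mem_sdiff.mp hc).1
    have hrec := ih (X \ A) htail hzA (fun B hB => hgood B (List.mem_cons_of_mem _ hB))
    have hset : A ∪ insert z (X \ A) = insert z X := by
      ext w
      simp only [Finset.mem_union, Finset.mem_insert, Finset.mem_sdiff]
      constructor
      · rintro (hw | (rfl | ⟨hw, _⟩)) <;> first | tauto | exact Or.inr (hsub hw)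
      · rintro (rfl | hw)
        · tauto
        · by_cases hwA : w ∈ A <;> tauto
    have := gco_build hrec hne hind
      (by
        rw [Finset.disjoint_left]
        intro a ha ha'
        rcases Finset.mem_insert.mp ha' with rfl | ha'
        · exact hz (hsub ha)
        · exact (Finset.mem_sdiff.mp ha').2 ha)
      (by
        intro w hw
        rcases Finset.mem_insert.mp hw with rfl | hw
        · exact hgood A (by simp)
        · exact hdom w hw)
    rwa [hset] at this

/-- Length bound. -/
lemma gco_length_le {X : Finset V} {C : List (Finset V)} (h : GrundyColoringOn G X C) :
    C.length ≤ X.card := by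
  obtain ⟨h1, h2, h3, h4, h5⟩ := h
  classical
  have hrep : ∀ i : Fin C.length, (C.get i).Nonempty := fun i => h1 _ (C.get_mem i)
  choose f hf using hrep
  have hpw := List.pairwise_iff_get.mp h2
  have hinj : Function.Injective f := by
    intro i j hij
    by_contra hne
    have hdisj : Disjoint (C.get i) (C.get j) := by
      rcases lt_or_gt_of_ne (fun h => hne (Fin.ext h) : (i : ℕ) ≠ j) with h | h
      · exact hpw i j (by exact h)
      · exact (hpw j i (by exact h)).symm
    exact hdisj.forall_ne_finset (hf i) (hij ▸ hf j) rfl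
  calc C.length = (Finset.univ : Finset (Fin C.length)).card := by simp
    _ ≤ X.card := Finset.card_le_card_of_injOn f
        (fun i _ => (h3 (f i)).mpr ⟨C.get i, C.get_mem i, hf i⟩)
        (hinj.injOn)


/-- Under the twin hypothesis no class can avoid the neighborhood of `z`. -/
lemma no_bad [DecidableRel G.Adj] {R F : Finset V} {r : ℕ}
    (hclique : G.IsClique ↑(Finset.univ \ R)) (hr : R.card = r)
    (hFS : F ⊆ Finset.univ \ R)
    {z : V}
    (hFz : (F.filter (fun u => ∀ w, (w = u ∨ G.Adj w u) ↔ (w = z ∨ G.Adj w z))).card =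
        min r (((Finset.univ \ R).filter
          (fun u => ∀ w, (w = u ∨ G.Adj w u) ↔ (w = z ∨ G.Adj w z))).card))
    (hzR : z ∉ R) (hzF : z ∉ F)
    {Y : Finset V} (hzY : z ∉ Y) (hFY : F ⊆ Y)
    {C : List (Finset V)} (h : GrundyColoringOn G Y C)
    {A : Finset V} (hAC : A ∈ C) : ∃ u ∈ A, G.Adj u z := by
  classical
  by_contra hbad
  push_neg at hbad
  obtain ⟨h1, h2, h3, h4, h5⟩ := h
  obtain ⟨ia, hia⟩ := List.mem_iff_get.mp hAC
  obtain ⟨x, hxA⟩ := h1 A hAC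
  have hAY : A ⊆ Y := fun a ha => (h3 a).mpr ⟨A, hAC, ha⟩
  have hzS : z ∈ ↑(Finset.univ \ R) := by simp [hzR]
  -- A ⊆ R
  have hAR : ∀ y ∈ A, y ∈ R := by
    intro y hy
    by_contra hyR
    have hyS : y ∈ ↑(Finset.univ \ R) := by simp [hyR]
    have hyz : y ≠ z := fun hh => hzY (hh ▸ hAY hy)
    exact hbad y hy (hclique hyS hzS hyz)
  have hxR : x ∈ R := hAR x hxA
  -- the twin set
  set T := F.filter (fun u => ∀ w, (w = u ∨ G.Adj w u) ↔ (w = z ∨ G.Adj w z)) with hTdef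
  have hTcard : T.card = r := by
    set b := ((Finset.univ \ R).filter
      (fun u => ∀ w, (w = u ∨ G.Adj w u) ↔ (w = z ∨ G.Adj w z))).card with hbdef
    have hzbig : z ∈ (Finset.univ \ R).filter
        (fun u => ∀ w, (w = u ∨ G.Adj w u) ↔ (w = z ∨ G.Adj w z)) := by
      refine Finset.mem_filter.mpr ⟨by simp [hzR], fun w => Iff.rfl⟩
    have hsub : T ⊆ ((Finset.univ \ R).filter
        (fun u => ∀ w, (w = u ∨ G.Adj w u) ↔ (w = z ∨ G.Adj w z))).erase z := by
      intro u hu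
      rcases Finset.mem_filter.mp hu with ⟨huF, htw⟩
      refine Finset.mem_erase.mpr ⟨fun hh => hzF (hh ▸ huF), Finset.mem_filter.mpr ⟨hFS huF, htw⟩⟩
    have h1' : T.card ≤ b - 1 := by
      have := Finset.card_le_card hsub
      rwa [Finset.card_erase_of_mem hzbig] at this
    have h2' : 1 ≤ b := Finset.card_pos.mpr ⟨z, hzbig⟩
    omega
  -- disjointness of classes by index
  have hpw := List.pairwise_iff_get.mp h2
  have hdisjget : ∀ i j : Fin C.length, i ≠ j → Disjoint (C.get i) (C.get j) := by
    intro i j hij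
    rcases lt_or_gt_of_ne (fun hh => hij (Fin.ext hh) : (i : ℕ) ≠ j) with hlt | hlt
    · exact hpw i j (by exact hlt)
    · exact (hpw j i (by exact hlt)).symm
  -- key: each twin yields a distinct element of R.erase x
  have hkey : ∀ u ∈ T, ∃ y, y ∈ R.erase x ∧ ∃ i : Fin C.length, u ∈ C.get i ∧ y ∈ C.get i := by
    intro u hu
    rcases Finset.mem_filter.mp hu with ⟨huF, htw⟩
    have huY : u ∈ Y := hFY huF
    have huS : u ∈ ↑(Finset.univ \ R) := by
      have := hFS huF; simpa using this
    -- no member of A equals or is adjacent to u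
    have hAu : ∀ y ∈ A, y ≠ u ∧ ¬ G.Adj y u := by
      intro y hy
      have hy1 : ¬(y = z ∨ G.Adj y z) := by
        rintro (rfl | hadj)
        · exact hzY (hAY hy)
        · exact hbad y hy hadj
      have h' := fun hh => hy1 ((htw y).mp hh)
      exact ⟨fun hh => h' (Or.inl hh), fun hh => h' (Or.inr hh)⟩
    -- index of u
    obtain ⟨B, hB, huB⟩ := (h3 u).mp huY
    obtain ⟨iu, hiu⟩ := List.mem_iff_get.mp hB
    rw [← hiu] at huB
    have hne : iu ≠ ia := by
      rintro rfl
      rw [hia] at huB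
      exact (hAu u huB).1 rfl
    have hlt : (iu : ℕ) < (ia : ℕ) := by
      by_contra hge
      have hneq : (iu : ℕ) ≠ (ia : ℕ) := fun hh => hne (Fin.ext hh)
      have hlt' : (ia : ℕ) < (iu : ℕ) := by omega
      obtain ⟨y, hyA, hadj⟩ := h5 iu ia iu.2 ia.2 hlt' u huB
      rw [hia] at hyA
      exact (hAu y hyA).2 hadj
    obtain ⟨y, hyB, hadj⟩ := h5 ia iu ia.2 iu.2 hlt x (by rw [hia]; exact hxA)
    -- y ∈ R
    have hyR : y ∈ R := by
      by_contra hyR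
      have hyS : y ∈ ↑(Finset.univ \ R) := by simp [hyR]
      by_cases hyu : y = u
      · subst hyu
        have hxu : x = z ∨ G.Adj x z := (htw x).mp (Or.inr hadj.symm)
        rcases hxu with rfl | hadj'
        · exact hzY (hAY hxA)
        · exact hbad x hxA hadj'
      · have hadj' : G.Adj y u := hclique hyS huS hyu
        exact h4 (C.get iu) (C.get_mem iu) y hyB u huB hadj'
    have hyx : y ≠ x := by
      intro rfl
      have := hdisjget iu ia hne
      exact this.forall_ne_finset hyB (by rw [hia] at *; exact hxA) rfl
    exact ⟨y, Finset.mem_erase.mpr ⟨hyx, hyR⟩, iu, huB, hyB⟩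
  choose g hg1 hg2 using hkey
  -- totalize
  have hinj : ∀ u₁ (h₁ : u₁ ∈ T), ∀ u₂ (h₂ : u₂ ∈ T), u₁ ≠ u₂ → g u₁ h₁ ≠ g u₂ h₂ := by
    intro u₁ h₁ u₂ h₂ hne12 heq
    obtain ⟨i₁, hu₁, hy₁⟩ := hg2 u₁ h₁
    obtain ⟨i₂, hu₂, hy₂⟩ := hg2 u₂ h₂
    have hi : i₁ ≠ i₂ := by
      rintro rfl
      have hu₁S : u₁ ∈ ↑(Finset.univ \ R) := by
        have := hFS (Finset.mem_filter.mp h₁).1; simpa using this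
      have hu₂S : u₂ ∈ ↑(Finset.univ \ R) := by
        have := hFS (Finset.mem_filter.mp h₂).1; simpa using this
      exact h4 (C.get i₁) (C.get_mem i₁) u₁ hu₁ u₂ hu₂ (hclique hu₁S hu₂S hne12)
    rw [heq] at hy₁
    exact (hdisjget i₁ i₂ hi).forall_ne_finset hy₁ hy₂ rfl
  -- pigeonhole
  have hcard : T.card ≤ (R.erase x).card := by
    have := Finset.card_le_card_of_injOn (s := T) (t := R.erase x) (fun u => if h : u ∈ T then g u h else x)
      (fun u hu => by dsimp only; rw [dif_pos (Finset.mem_coe.mp hu)]; exact hg1 u (Finset.mem_coe.mp hu))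
      (by
        intro u₁ h₁ u₂ h₂ heq
        simp only [Finset.mem_coe] at h₁ h₂
        by_contra hne12
        apply hinj u₁ h₁ u₂ h₂ hne12
        simpa only [dif_pos h₁, dif_pos h₂] using heq)
    exact this
  rw [hTcard, Finset.card_erase_of_mem hxR, hr] at hcard
  have : 1 ≤ r := hr ▸ Finset.card_pos.mpr ⟨x, hxR⟩
  omega


variable (G)

noncomputable def M (X : Finset V) : ℕ := sSup (grundySet G X)

lemma grundy_nonempty [DecidableRel G.Adj] (X : Finset V) : (grundySet G X).Nonempty := by
  obtain ⟨C, hC, -⟩ := gco_extend (Finset.empty_subset X) (gco_nil (G := G))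
  exact ⟨C.length, C, hC, rfl⟩

lemma grundy_bdd (X : Finset V) : BddAbove (grundySet G X) := by
  refine ⟨X.card, ?_⟩
  rintro n ⟨C, hC, rfl⟩
  exact gco_length_le hC

lemma M_mem [DecidableRel G.Adj] (X : Finset V) : M G X ∈ grundySet G X :=
  Nat.sSup_mem (grundy_nonempty G X) (grundy_bdd G X)

lemma le_M {n : ℕ} {X : Finset V} (hn : n ∈ grundySet G X) : n ≤ M G X :=
  le_csSup (grundy_bdd G X) hn

variable {G}

/-- The one-vertex step. -/
lemma step [DecidableRel G.Adj] {R F : Finset V} {r : ℕ}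
    (hclique : G.IsClique ↑(Finset.univ \ R)) (hr : R.card = r)
    (hFS : F ⊆ Finset.univ \ R)
    (hF : ∀ v ∈ Finset.univ \ R,
      (F.filter (fun u => ∀ w, (w = u ∨ G.Adj w u) ↔ (w = v ∨ G.Adj w v))).card =
        min r (((Finset.univ \ R).filter
          (fun u => ∀ w, (w = u ∨ G.Adj w u) ↔ (w = v ∨ G.Adj w v))).card))
    {X : Finset V} (hRFX : R ∪ F ⊆ X) {z : V} (hzX : z ∈ X) (hzRF : z ∉ R ∪ F) :
    M G X = M G (X.erase z) + 1 := by
  have hzR : z ∉ R := fun hc => hzRF (Finset.mem_union_left _ hc)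
  have hzF : z ∉ F := fun hc => hzRF (Finset.mem_union_right _ hc)
  have hFX : F ⊆ X.erase z := by
    intro a ha
    exact Finset.mem_erase.mpr ⟨fun hh => hzF (hh ▸ ha),
      hRFX (Finset.mem_union_right _ ha)⟩
  -- ≥ : append z to an optimal coloring of X.erase z
  have hge : M G (X.erase z) + 1 ≤ M G X := by
    obtain ⟨C, hC, hlen⟩ := M_mem G (X.erase z)
    have hzY : z ∉ X.erase z := Finset.notMem_erase z X
    have hgood : ∀ A ∈ C, ∃ u ∈ A, G.Adj u z := by
      intro A hAC
      exact no_bad hclique hr hFS (hF z (by simp [hzR])) hzR hzF hzY hFX hC hAC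
    have happ := gco_append C (X.erase z) hC hzY hgood
    rw [Finset.insert_erase hzX] at happ
    refine le_M G ⟨C ++ [{z}], happ, ?_⟩
    simp [hlen]
  -- ≤ : remove z's class, re-insert the rest
  have hle : M G X ≤ M G (X.erase z) + 1 := by
    obtain ⟨D, hD, hlen⟩ := M_mem G X
    obtain ⟨A, hAD, hzA⟩ := (hD.2.2.1 z).mp hzX
    obtain ⟨D₁, D₂, rfl⟩ := List.append_of_mem hAD
    have herase := gco_erase_class D₁ hD
    have hsub : X \ A ⊆ X.erase z := by
      intro a ha
      rcases Finset.mem_sdiff.mp ha with ⟨haX, haA⟩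
      exact Finset.mem_erase.mpr ⟨fun hh => haA (hh ▸ hzA), haX⟩
    obtain ⟨C', hC', hlen'⟩ := gco_extend hsub herase
    have h1 : C'.length ≤ M G (X.erase z) := le_M G ⟨C', hC', rfl⟩
    have h2 : (D₁ ++ A :: D₂).length = D₁.length + D₂.length + 1 := by
      simp [List.length_append]; omega
    have h3 : (D₁ ++ D₂).length = D₁.length + D₂.length := by simp
    omega
  omega

/-- Main induction. -/
lemma main [DecidableRel G.Adj] {R F : Finset V} {r : ℕ}
    (hclique : G.IsClique ↑(Finset.univ \ R)) (hr : R.card = r)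
    (hFS : F ⊆ Finset.univ \ R)
    (hF : ∀ v ∈ Finset.univ \ R,
      (F.filter (fun u => ∀ w, (w = u ∨ G.Adj w u) ↔ (w = v ∨ G.Adj w v))).card =
        min r (((Finset.univ \ R).filter
          (fun u => ∀ w, (w = u ∨ G.Adj w u) ↔ (w = v ∨ G.Adj w v))).card)) :
    ∀ (n : ℕ) (X : Finset V), R ∪ F ⊆ X → (X \ (R ∪ F)).card = n →
      M G X = M G (R ∪ F) + n := by
  intro n
  induction n with
  | zero =>
    intro X hsub hcard
    have : X = R ∪ F := by
      have h0 : X \ (R ∪ F) = ∅ := Finset.card_eq_zero.mp hcard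
      exact Finset.Subset.antisymm (Finset.sdiff_eq_empty_iff_subset.mp h0) hsub
    rw [this]
    omega
  | succ n ih =>
    intro X hsub hcard
    have hne : (X \ (R ∪ F)).Nonempty := by rw [← Finset.card_pos, hcard]; omega
    obtain ⟨z, hz⟩ := hne
    rcases Finset.mem_sdiff.mp hz with ⟨hzX, hzRF⟩
    have hstep := step hclique hr hFS hF hsub hzX hzRF
    have hsub' : R ∪ F ⊆ X.erase z := by
      intro a ha
      exact Finset.mem_erase.mpr ⟨fun hh => hzRF (hh ▸ ha), hsub ha⟩
    have hcard' : (X.erase z \ (R ∪ F)).card = n := by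
      have : X.erase z \ (R ∪ F) = (X \ (R ∪ F)).erase z := by
        ext a
        simp only [Finset.mem_sdiff, Finset.mem_erase]
        tauto
      rw [this, Finset.card_erase_of_mem hz, hcard]
      omega
    have := ih (X.erase z) hsub' hcard'
    omega

end GP

/-- Kernel lemma for a clique modulator: if `F` picks `min r |E|` vertices from each
closed-neighborhood equivalence class `E` of `S = V ∖ R`, then the Grundy number of `G`
equals the Grundy number of `G[R ∪ F]` plus `|V ∖ (R ∪ F)|`. -/
theorem stmt9 (G : SimpleGraph V) [DecidableRel G.Adj] (R : Finset V) (r : ℕ)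
    (hr : R.card = r) (hclique : G.IsClique ↑(Finset.univ \ R))
    (F : Finset V) (hFS : F ⊆ Finset.univ \ R)
    (hF : ∀ v ∈ Finset.univ \ R,
      (F.filter (fun u => ∀ w, (w = u ∨ G.Adj w u) ↔ (w = v ∨ G.Adj w v))).card =
        min r (((Finset.univ \ R).filter
          (fun u => ∀ w, (w = u ∨ G.Adj w u) ↔ (w = v ∨ G.Adj w v))).card))
    (γ γ' : ℕ)
    (hγ : IsGreatest (grundySet G Finset.univ) γ)
    (hγ' : IsGreatest (grundySet G (R ∪ F)) γ') :
    γ = γ' + (Finset.univ \ (R ∪ F)).card := by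
  have hγM : γ = GP.M G Finset.univ :=
    hγ.unique ⟨GP.M_mem G _, fun n hn => GP.le_M G hn⟩
  have hγ'M : γ' = GP.M G (R ∪ F) :=
    hγ'.unique ⟨GP.M_mem G _, fun n hn => GP.le_M G hn⟩
  have hmain := GP.main hclique hr hFS hF (Finset.univ \ (R ∪ F)).card Finset.univ
    (Finset.subset_univ _) rfl
  rw [hγM, hγ'M, hmain]
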